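/- In a well-founded abstract argumentation framework, every complete extension is a grounded extension, i.e., it is a minimal (with respect to set inclusion) complete extension. -/

import Mathlib

/-- A set of arguments `S` attacks an argument `α` if some `β ∈ S` attacks `α`. -/
def attacks {A : Type*} (R : A → A → Prop) (S : Set A) (α : A) : Prop :=
  ∃ β ∈ S, R β α

/-- A set of arguments `S` is conflict-free if no argument in `S` is attacked by `S`. -/
def conflictFree {A : Type*} (R : A → A → Prop) (S : Set A) : Prop :=
  ∀ β ∈ S, ¬ attacks R S β

/-- An argument `α` is acceptable w.r.t. `S` if every attacker of `α` is attacked by `S`. -/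
def acceptable {A : Type*} (R : A → A → Prop) (α : A) (S : Set A) : Prop :=
  ∀ β, R β α → attacks R S β

/-- A set `S` is admissible if it is conflict-free and every argument in `S`
is acceptable with respect to `S`. -/
def admissible {A : Type*} (R : A → A → Prop) (S : Set A) : Prop :=
  conflictFree R S ∧ ∀ α ∈ S, acceptable R α S

/-- A set `S` is a complete extension if it is admissible and every argument
acceptable with respect to `S` belongs to `S`. -/
def completeExt {A : Type*} (R : A → A → Prop) (S : Set A) : Prop :=
  admissible R S ∧ ∀ α, acceptable R α S → α ∈ S

/-- An AF is well-founded if there is no infinite sequence `α₀, α₁, …`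
with `(α_{i+1}, α_i) ∈ R` for all `i`. -/
def wellFoundedAF {A : Type*} (R : A → A → Prop) : Prop :=
  ¬ ∃ f : ℕ → A, ∀ i : ℕ, R (f (i + 1)) (f i)

/-- In a well-founded AF, every complete extension is a grounded extension,
i.e. a minimal (w.r.t. set inclusion) complete extension. -/
theorem wellFounded_complete_is_grounded {A : Type*} (R : A → A → Prop)
    (hwf : wellFoundedAF R) (S : Set A) (hS : completeExt R S) :
    completeExt R S ∧ ∀ T : Set A, completeExt R T → T ⊆ S → T = S := by
  have hWF : WellFounded R := by
    constructor
    intro a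
    by_contra ha
    have step : ∀ x : {a // ¬Acc R a}, ∃ y : {a // ¬Acc R a}, R y.1 x.1 := by
      rintro ⟨x, hx⟩
      obtain ⟨b, hb, hr⟩ := exists_not_acc_lt_of_not_acc hx
      exact ⟨⟨b, hb⟩, hr⟩
    choose g hg using step
    exact hwf ⟨fun n => (g^[n] ⟨a, ha⟩).1,
      fun i => by simp only [Function.iterate_succ']; exact hg _⟩
  have hWFT : WellFounded (Relation.TransGen R) := hWF.transGen
  refine ⟨hS, fun T hT hTS => ?_⟩
  have hsub : ∀ α, α ∈ S → α ∈ T := by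
    intro α
    induction α using hWFT.induction with
    | _ α IH =>
      intro hα
      apply hT.2
      intro β hβα
      obtain ⟨γ, hγS, hγβ⟩ := hS.1.2 α hα β hβα
      exact ⟨γ, IH γ (Relation.TransGen.head hγβ (Relation.TransGen.single hβα)) hγS, hγβ⟩
  exact Set.Subset.antisymm hTS hsub
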